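/- Let K be a field and let (π_i : L → L_i)_{i ∈ I} be a limit cone of a codirected diagram of K-vector spaces. If x_1, ..., x_n are linearly independent vectors in L, then there exists i ∈ I such that π_i(x_1), ..., π_i(x_n) are linearly independent in L_i. -/

import Mathlib

open CategoryTheory Limits

theorem stmt1 {K : Type u} [Field K] {I : Type u} [PartialOrder I]
    (hcod : ∀ s : Finset I, ∃ j : I, ∀ i ∈ s, j ≤ i)
    (D : I ⥤ ModuleCat.{u} K) (c : Cone D) (hc : IsLimit c)
    {n : ℕ} (x : Fin n → c.pt) (hx : LinearIndependent K x) :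
    ∃ i : I, LinearIndependent K (fun k : Fin n => c.π.app i (x k)) := by
  classical
  -- the "relation" submodules
  set W : I → Submodule K (Fin n → K) := fun i =>
    LinearMap.ker ((c.π.app i).hom ∘ₗ
      (Fintype.linearCombination K x)) with hW
  have hmono : ∀ ⦃j i : I⦄, j ≤ i → W j ≤ W i := by
    intro j i hji v hv
    have hnat : c.π.app i = c.π.app j ≫ D.map (homOfLE hji) := by
      exact (c.w (homOfLE hji)).symm
    simp only [hW, LinearMap.mem_ker, LinearMap.comp_apply] at hv ⊢
    rw [hnat]
    erw [CategoryTheory.comp_apply, hv, map_zero]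
  -- nonempty I
  obtain ⟨j0, -⟩ := hcod ∅
  -- pick i0 minimizing finrank
  have hne : (Set.range fun i => Module.finrank K (W i)).Nonempty := ⟨_, ⟨j0, rfl⟩⟩
  obtain ⟨i0, hi0⟩ := Nat.sInf_mem hne
  have hmin : ∀ i, Module.finrank K (W i0) ≤ Module.finrank K (W i) := by
    intro i
    exact le_trans (le_of_eq hi0) (Nat.sInf_le ⟨i, rfl⟩)
  refine ⟨i0, ?_⟩
  rw [Fintype.linearIndependent_iff]
  intro g hg k
  -- g ∈ W i0
  have hgW : g ∈ W i0 := by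
    simp only [hW, LinearMap.mem_ker, LinearMap.comp_apply,
      Fintype.linearCombination_apply]
    simpa [map_sum, map_smul] using hg
  -- g ∈ W i for all i
  have hall : ∀ i, g ∈ W i := by
    intro i
    obtain ⟨j, hj⟩ := hcod {i0, i}
    have hj0 : j ≤ i0 := hj i0 (by simp)
    have hji : j ≤ i := hj i (by simp)
    have hle : W j ≤ W i0 := hmono hj0
    have heq : W j = W i0 :=
      Submodule.eq_of_le_of_finrank_le hle (hmin j)
    exact hmono hji (heq ▸ hgW)
  -- hence the combination is zero in c.pt
  have hzero : (Fintype.linearCombination K x) g = 0 := by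
    apply Concrete.isLimit_ext D hc
    intro i
    have := hall i
    simp only [hW, LinearMap.mem_ker, LinearMap.comp_apply] at this
    simpa [map_zero] using this
  have := Fintype.linearIndependent_iff.mp hx g (by
    simpa [Fintype.linearCombination_apply] using hzero)
  exact this k
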